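/- (∫₀^∞ 1/(1+z²) dz)² < (∫₀^∞ z^{3/5}/(1+z²) dz) · (∫₀^∞ z^{−3/5}/(1+z²) dz), and all three integrals are finite. -/

import Mathlib

open MeasureTheory Set Real

/-- Integrability of `z ^ a / (1 + z ^ 2)` on `(0, ∞)` for `-1 < a < 1`. -/
lemma aux_int {a : ℝ} (h1 : -1 < a) (h2 : a < 1) :
    IntegrableOn (fun z : ℝ => z ^ a / (1 + z ^ 2)) (Ioi 0) := by
  have hmeas : ∀ s ⊆ Ioi (0:ℝ), MeasurableSet s →
      AEStronglyMeasurable (fun z : ℝ => z ^ a / (1 + z ^ 2)) (volume.restrict s) := by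
    intro s hs hms
    apply ContinuousOn.aestronglyMeasurable _ hms
    intro x hx
    have hx0 : (0:ℝ) < x := hs hx
    exact ((continuousAt_rpow_const x a (Or.inl hx0.ne')).continuousWithinAt.div
      ((continuous_const.add (continuous_pow 2)).continuousWithinAt) (by positivity))
  have h01 : IntegrableOn (fun z : ℝ => z ^ a / (1 + z ^ 2)) (Ioo 0 1) := by
    have hi : IntegrableOn (fun z : ℝ => z ^ a) (Ioo (0:ℝ) 1) :=
      (intervalIntegral.integrableOn_Ioo_rpow_iff one_pos).mpr h1
    refine Integrable.mono hi (hmeas _ (fun x hx => hx.1) measurableSet_Ioo) ?_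
    filter_upwards [ae_restrict_mem measurableSet_Ioo] with x hx
    have hx0 : (0:ℝ) < x := hx.1
    rw [norm_div, norm_of_nonneg (by positivity), norm_of_nonneg (by positivity)]
    rw [div_le_iff₀ (by positivity)]
    nlinarith [rpow_nonneg hx0.le a, sq_nonneg x]
  have h1i : IntegrableOn (fun z : ℝ => z ^ a / (1 + z ^ 2)) (Ici 1) := by
    have hi : IntegrableOn (fun z : ℝ => z ^ (a - 2)) (Ici (1:ℝ)) := by
      refine (integrableOn_Ioi_rpow_of_lt (by linarith) one_pos).congr_set_ae ?_
      exact (Ioi_ae_eq_Ici (a := (1:ℝ))).symm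
    refine Integrable.mono hi (hmeas _ (fun x hx => show (0:ℝ) < x from lt_of_lt_of_le one_pos hx) measurableSet_Ici) ?_
    filter_upwards [ae_restrict_mem measurableSet_Ici] with x hx
    have hx0 : (0:ℝ) < x := lt_of_lt_of_le one_pos hx
    rw [norm_div, norm_of_nonneg (by positivity), norm_of_nonneg (by positivity),
      norm_of_nonneg (by positivity), div_le_iff₀ (by positivity)]
    have : x ^ (a-2) * x ^ (2:ℝ) = x ^ a := by rw [← rpow_add hx0]; ring_nf
    rw [rpow_two] at this
    nlinarith [rpow_nonneg hx0.le (a-2)]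
  have hsub : Ioi (0:ℝ) ⊆ Ioo 0 1 ∪ Ici 1 := by
    intro x hx; rcases lt_or_ge x 1 with h | h
    · exact Or.inl ⟨hx, h⟩
    · exact Or.inr h
  exact (h01.union h1i).mono_set hsub

/-- The substitution `z ↦ z⁻¹` identifies the two weighted integrals. -/
lemma aux_sub :
    (∫ z in Ioi (0:ℝ), z ^ ((3:ℝ)/5) / (1 + z ^ 2)) =
    (∫ z in Ioi (0:ℝ), z ^ (-(3:ℝ)/5) / (1 + z ^ 2)) := by
  have h := integral_comp_rpow_Ioi (fun y : ℝ => y ^ (-(3:ℝ)/5) / (1 + y ^ 2))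
    (p := -1) (by norm_num)
  rw [← h]
  refine setIntegral_congr_fun measurableSet_Ioi ?_
  intro x hx
  have hx0 : (0:ℝ) < x := hx
  simp only [smul_eq_mul, abs_neg, abs_one, one_mul]
  have h2 : (x ^ (-1:ℝ)) ^ (-(3:ℝ)/5) = x ^ ((3:ℝ)/5) := by
    rw [← rpow_mul hx0.le]; norm_num
  have h3 : (x ^ (-1:ℝ)) ^ (2:ℕ) = (x ^ (2:ℕ))⁻¹ := by
    rw [rpow_neg_one, inv_pow]
  have h4 : x ^ ((-1:ℝ) - 1) = (x ^ (2:ℕ))⁻¹ := by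
    rw [show ((-1:ℝ) - 1) = -(2:ℕ) by norm_num, rpow_neg hx0.le, rpow_natCast]
  rw [h2, h3, h4]
  have hx2 : (0:ℝ) < x ^ (2:ℕ) := by positivity
  field_simp
  ring

theorem stmt_6 :
    IntegrableOn (fun z : ℝ => 1 / (1 + z ^ 2)) (Ioi 0) ∧
    IntegrableOn (fun z : ℝ => z ^ ((3 : ℝ) / 5) / (1 + z ^ 2)) (Ioi 0) ∧
    IntegrableOn (fun z : ℝ => z ^ (-(3 : ℝ) / 5) / (1 + z ^ 2)) (Ioi 0) ∧
    (∫ z in Ioi (0 : ℝ), 1 / (1 + z ^ 2)) ^ 2 <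
      (∫ z in Ioi (0 : ℝ), z ^ ((3 : ℝ) / 5) / (1 + z ^ 2)) *
      (∫ z in Ioi (0 : ℝ), z ^ (-(3 : ℝ) / 5) / (1 + z ^ 2)) := by
  have hI0 : IntegrableOn (fun z : ℝ => 1 / (1 + z ^ 2)) (Ioi 0) := by
    simpa [one_div] using integrable_inv_one_add_sq.integrableOn (s := Ioi 0)
  have hA : IntegrableOn (fun z : ℝ => z ^ ((3:ℝ)/5) / (1 + z ^ 2)) (Ioi 0) :=
    aux_int (by norm_num) (by norm_num)
  have hB : IntegrableOn (fun z : ℝ => z ^ (-(3:ℝ)/5) / (1 + z ^ 2)) (Ioi 0) :=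
    aux_int (by norm_num) (by norm_num)
  refine ⟨hI0, hA, hB, ?_⟩
  set I := (∫ z in Ioi (0 : ℝ), 1 / (1 + z ^ 2)) with hIdef
  set A := (∫ z in Ioi (0 : ℝ), z ^ ((3:ℝ)/5) / (1 + z ^ 2)) with hAdef
  set B := (∫ z in Ioi (0 : ℝ), z ^ (-(3:ℝ)/5) / (1 + z ^ 2)) with hBdef
  have hAB : A = B := aux_sub
  -- the AM-GM comparison function
  set D := fun z : ℝ => (z ^ ((3:ℝ)/5) / (1 + z ^ 2) + z ^ (-(3:ℝ)/5) / (1 + z ^ 2)) / 2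
      - 1 / (1 + z ^ 2) with hDdef
  have hDint : IntegrableOn D (Ioi 0) := ((hA.add hB).div_const 2).sub hI0
  -- pointwise nonnegativity and strict positivity for z > 1
  have hpt : ∀ z : ℝ, 0 < z → 0 ≤ D z ∧ (1 < z → 0 < D z) := by
    intro z hz
    have ht : (0:ℝ) < z ^ ((3:ℝ)/5) := rpow_pos_of_pos hz _
    have hneg : z ^ (-(3:ℝ)/5) = (z ^ ((3:ℝ)/5))⁻¹ := by
      rw [show (-(3:ℝ)/5) = -((3:ℝ)/5) by ring, rpow_neg hz.le]
    set t := z ^ ((3:ℝ)/5) with htdef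
    have hd : (0:ℝ) < 1 + z ^ 2 := by positivity
    have he : D z = ((t + t⁻¹)/2 - 1) / (1 + z ^ 2) := by
      rw [hDdef]; simp only [hneg]; ring
    have hti : t * t⁻¹ = 1 := mul_inv_cancel₀ ht.ne'
    constructor
    · rw [he]
      apply div_nonneg _ hd.le
      nlinarith [sq_nonneg (t - 1)]
    · intro hz1
      have ht1 : 1 < t := by
        rw [htdef]
        exact one_lt_rpow_iff_of_pos hz |>.mpr (Or.inl ⟨hz1, by norm_num⟩)
      rw [he]
      apply div_pos _ hd
      have hsq : (0:ℝ) < (t - 1) ^ 2 := pow_pos (by linarith) 2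
      nlinarith
  -- the integral of D is positive
  have hpos : 0 < ∫ z in Ioi (0:ℝ), D z := by
    rw [setIntegral_pos_iff_support_of_nonneg_ae]
    · refine lt_of_lt_of_le ?_ (measure_mono (show Ioi (1:ℝ) ⊆ Function.support D ∩ Ioi 0 from ?_))
      · rw [Real.volume_Ioi]; exact ENNReal.zero_lt_top
      · intro z hz
        have hz1 : (1:ℝ) < z := hz
        have hz0 : (0:ℝ) < z := lt_trans one_pos hz1
        exact ⟨((hpt z hz0).2 hz1).ne', hz0⟩
    · filter_upwards [ae_restrict_mem measurableSet_Ioi] with z hz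
      exact (hpt z hz).1
    · exact hDint
  -- compute the integral of D
  have hDval : (∫ z in Ioi (0:ℝ), D z) = (A + B)/2 - I := by
    have h2 : IntegrableOn
        (fun z : ℝ => (z ^ ((3:ℝ)/5) / (1 + z ^ 2) + z ^ (-(3:ℝ)/5) / (1 + z ^ 2)) / 2)
        (Ioi 0) := (hA.add hB).div_const 2
    rw [hDdef]
    rw [integral_sub h2 hI0, integral_div, integral_add hA hB]
  have hIA : I < A := by
    rw [hDval] at hpos; linarith [hAB]
  have hI : 0 ≤ I := by
    apply setIntegral_nonneg measurableSet_Ioi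
    intro z hz; positivity
  calc I ^ 2 < A ^ 2 := by nlinarith
    _ = A * B := by rw [sq, hAB]
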